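/- Let 1 ≤ q ≤ 2 and let X, A be positive definite n×n matrices. Then the Tsallis relative entropy D_{2-q}(X|A) = Tr(X^{2-q}(log_q X - log_q A)) equals the supremum over self-adjoint matrices L satisfying L + log_q A > -1/(q-1)·I of Tr(X) + Tr(X^{2-q} L) - Tr(exp_q(L + log_q A)), with the supremum attained at L = log_q X - log_q A. -/

import Mathlib

open Matrix ComplexOrder

variable {n : ℕ}

/-- Apply a real function to a matrix via the spectral decomposition (functional calculus).
Returns `0` if the matrix is not Hermitian. -/
noncomputable def matFun (f : ℝ → ℝ) (A : Matrix (Fin n) (Fin n) ℂ) :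
    Matrix (Fin n) (Fin n) ℂ :=
  if hA : A.IsHermitian then
    (hA.eigenvectorUnitary : Matrix (Fin n) (Fin n) ℂ) *
      Matrix.diagonal (fun i => (f (hA.eigenvalues i) : ℂ)) *
      (star hA.eigenvectorUnitary : Matrix (Fin n) (Fin n) ℂ)
  else 0

/-- Matrix power `A^r` by functional calculus. -/
noncomputable def mpow (A : Matrix (Fin n) (Fin n) ℂ) (r : ℝ) : Matrix (Fin n) (Fin n) ℂ :=
  matFun (fun t => t ^ r) A

/-- Deformed matrix logarithm `log_q`. -/
noncomputable def mlogq (q : ℝ) (A : Matrix (Fin n) (Fin n) ℂ) : Matrix (Fin n) (Fin n) ℂ :=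
  matFun (fun t => if q = 1 then Real.log t else (t ^ (q - 1) - 1) / (q - 1)) A

/-- Deformed matrix exponential `exp_q`. -/
noncomputable def mexpq (q : ℝ) (M : Matrix (Fin n) (Fin n) ℂ) : Matrix (Fin n) (Fin n) ℂ :=
  matFun (fun s => if q = 1 then Real.exp s else ((q - 1) * s + 1) ^ (1 / (q - 1))) M

/-- Real part of the trace. -/
noncomputable def rtr (A : Matrix (Fin n) (Fin n) ℂ) : ℝ := (Matrix.trace A).re

/-- Scalar deformed logarithm. -/
noncomputable def dlog (q t : ℝ) : ℝ := if q = 1 then Real.log t else (t ^ (q - 1) - 1) / (q - 1)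

namespace TsallisAux

/-- Scalar deformed exponential. -/
noncomputable def dexp (q s : ℝ) : ℝ :=
  if q = 1 then Real.exp s else ((q - 1) * s + 1) ^ (1 / (q - 1))

lemma scalar_ineq {q lam kap : ℝ} (hq1 : 1 ≤ q) (hq2 : q ≤ 2) (hlam : 0 < lam)
    (hkap : 0 < (q - 1) * kap + 1) :
    lam + lam ^ (2 - q) * kap - dexp q kap ≤ lam ^ (2 - q) * dlog q lam := by
  rcases eq_or_lt_of_le hq1 with hq | hq
  · subst hq
    simp only [dexp, dlog, if_pos rfl]
    norm_num
    have hμ : (0:ℝ) < Real.exp kap := Real.exp_pos _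
    have h := Real.log_le_sub_one_of_pos (div_pos hμ hlam)
    rw [Real.log_div hμ.ne' hlam.ne'] at h
    have h2 : lam * (Real.log (Real.exp kap) - Real.log lam) ≤ lam * (Real.exp kap / lam - 1) :=
      mul_le_mul_of_nonneg_left h hlam.le
    rw [Real.log_exp] at h2
    have h3 : lam * (Real.exp kap / lam) = Real.exp kap := by field_simp
    nlinarith
  · have hc : 0 < q - 1 := by linarith
    have hcne : q - 1 ≠ 0 := hc.ne'
    set μ : ℝ := ((q - 1) * kap + 1) ^ (1 / (q - 1)) with hμdef
    have hμ : 0 < μ := Real.rpow_pos_of_pos hkap _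
    have hμpow : μ ^ (q - 1) = (q - 1) * kap + 1 := by
      rw [hμdef, one_div, Real.rpow_inv_rpow hkap.le hcne]
    have hk : kap = (μ ^ (q - 1) - 1) / (q - 1) := by
      rw [hμpow]; field_simp; ring
    have hAM : lam ^ (2 - q) * μ ^ (q - 1) ≤ (2 - q) * lam + (q - 1) * μ :=
      Real.geom_mean_le_arith_mean2_weighted (by linarith) (by linarith) hlam.le hμ.le (by ring)
    have hlampow : lam ^ (2 - q) * lam ^ (q - 1) = lam := by
      rw [← Real.rpow_add hlam]; norm_num
    have hXpos : 0 < lam ^ (2 - q) := Real.rpow_pos_of_pos hlam _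
    rw [dexp, dlog, if_neg (by linarith : q ≠ 1), if_neg (by linarith : q ≠ 1), ← hμdef, hk]
    rw [← mul_le_mul_iff_left₀ hc]
    field_simp
    nlinarith [hAM, hlampow, hXpos]

lemma dexp_dlog {q t : ℝ} (ht : 0 < t) : dexp q (dlog q t) = t := by
  rcases eq_or_ne q 1 with h | h
  · simp [dexp, dlog, h, Real.exp_log ht]
  · have hc : q - 1 ≠ 0 := sub_ne_zero.mpr h
    simp only [dexp, dlog, if_neg h]
    rw [mul_div_cancel₀ _ hc, sub_add_cancel, one_div, Real.rpow_rpow_inv ht.le hc]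

lemma contOn (f : ℝ → ℝ) (s : Set ℝ) (hs : s.Finite) : ContinuousOn f s := by
  rw [continuousOn_iff_continuous_restrict]
  have : Finite s := hs
  have : DiscreteTopology s := Finite.instDiscreteTopology
  exact continuous_of_discreteTopology

lemma contOnSpec (f : ℝ → ℝ) (A : Matrix (Fin n) (Fin n) ℂ) : ContinuousOn f (spectrum ℝ A) :=
  contOn f _ (Matrix.finite_real_spectrum (A := A))

variable {A B : Matrix (Fin n) (Fin n) ℂ}

lemma matFun_cfc (hA : A.IsHermitian) (f : ℝ → ℝ) : matFun f A = cfc f A := by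
  rw [matFun, dif_pos hA, hA.cfc_eq]
  rfl

lemma cfc_one' (hA : A.IsHermitian) : cfc (fun _ : ℝ => (1:ℝ)) A = 1 := by
  show cfc (1 : ℝ → ℝ) A = 1
  exact cfc_one ℝ A hA

lemma smul_cfc_add_one (hA : A.IsHermitian) (r : ℝ) (f : ℝ → ℝ) :
    r • cfc f A + 1 = cfc (fun t => r * f t + 1) A := by
  have h2 : cfc (fun t : ℝ => r * f t + 1) A
      = cfc (fun t : ℝ => r * f t) A + cfc (fun _ : ℝ => (1:ℝ)) A :=
    cfc_add A _ _ (contOnSpec _ A) (contOnSpec _ A)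
  have h3 : cfc (fun t : ℝ => r * f t) A = r • cfc f A :=
    cfc_smul r f A (contOnSpec _ A)
  rw [h2, h3, cfc_one' hA]

lemma unit_mul (hA : A.IsHermitian) :
    (hA.eigenvectorUnitary : Matrix (Fin n) (Fin n) ℂ) *
      star (hA.eigenvectorUnitary : Matrix (Fin n) (Fin n) ℂ) = 1 :=
  Unitary.mul_star_self_of_mem (SetLike.coe_mem _)

lemma mul_unit (hA : A.IsHermitian) :
    star (hA.eigenvectorUnitary : Matrix (Fin n) (Fin n) ℂ) *
      (hA.eigenvectorUnitary : Matrix (Fin n) (Fin n) ℂ) = 1 :=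
  Unitary.star_mul_self_of_mem (SetLike.coe_mem _)

/-- trace of the product of two spectral functions as a double sum -/
lemma rtr_cfc_mul_cfc (hA : A.IsHermitian) (hB : B.IsHermitian) (f g : ℝ → ℝ) :
    rtr (hA.cfc f * hB.cfc g) =
      ∑ i, ∑ j, ‖((star (hA.eigenvectorUnitary : Matrix (Fin n) (Fin n) ℂ) *
          (hB.eigenvectorUnitary : Matrix (Fin n) (Fin n) ℂ)) i j)‖^2 *
        (f (hA.eigenvalues i) * g (hB.eigenvalues j)) := by
  set U := (hA.eigenvectorUnitary : Matrix (Fin n) (Fin n) ℂ) with hU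
  set V := (hB.eigenvectorUnitary : Matrix (Fin n) (Fin n) ℂ) with hV
  set W := star U * V with hW
  set D := (diagonal (RCLike.ofReal ∘ f ∘ hA.eigenvalues) : Matrix (Fin n) (Fin n) ℂ) with hD
  set E := (diagonal (RCLike.ofReal ∘ g ∘ hB.eigenvalues) : Matrix (Fin n) (Fin n) ℂ) with hE
  have hsW : star W = star V * U := by
    rw [hW, StarMul.star_mul]; simp
  have h2 : trace (hA.cfc f * hB.cfc g) = trace (D * W * E * star W) := by
    rw [Matrix.IsHermitian.cfc, Matrix.IsHermitian.cfc]
    simp only [Unitary.conjStarAlgAut_apply, Unitary.coe_star]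
    rw [← hU, ← hV, ← hD, ← hE]
    have e1 : U * D * star U * (V * E * star V) = U * (D * star U * (V * E * star V)) := by
      simp only [mul_assoc]
    rw [e1, Matrix.trace_mul_comm]
    refine congrArg Matrix.trace ?_
    rw [hsW, hW]
    simp only [mul_assoc]
  rw [rtr, h2, Matrix.trace, Complex.re_sum]
  refine Finset.sum_congr rfl (fun i _ => ?_)
  have hDWE : ∀ j, (D * W * E) i j = (f (hA.eigenvalues i) : ℂ) * W i j *
      (g (hB.eigenvalues j) : ℂ) := by
    intro j
    rw [hE, Matrix.mul_diagonal, hD, Matrix.diagonal_mul]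
    simp [Function.comp]
  have hdi : (D * W * E * star W).diag i = ∑ j, ((f (hA.eigenvalues i) : ℂ) *
      (g (hB.eigenvalues j) : ℂ)) * (W i j * (starRingEnd ℂ) (W i j)) := by
    rw [Matrix.diag_apply, Matrix.mul_apply]
    refine Finset.sum_congr rfl (fun j _ => ?_)
    rw [hDWE j, Matrix.star_apply, RCLike.star_def]
    ring
  rw [hdi, Complex.re_sum]
  refine Finset.sum_congr rfl (fun j _ => ?_)
  rw [Complex.mul_conj]
  rw [← Complex.ofReal_mul, ← Complex.ofReal_mul]
  rw [Complex.ofReal_re]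
  rw [Complex.normSq_eq_norm_sq]
  ring

lemma row_sum (hA : A.IsHermitian) (hB : B.IsHermitian) (i : Fin n) :
    ∑ j, ‖((star (hA.eigenvectorUnitary : Matrix (Fin n) (Fin n) ℂ) *
        (hB.eigenvectorUnitary : Matrix (Fin n) (Fin n) ℂ)) i j)‖^2 = 1 := by
  set U := (hA.eigenvectorUnitary : Matrix (Fin n) (Fin n) ℂ)
  set V := (hB.eigenvectorUnitary : Matrix (Fin n) (Fin n) ℂ)
  set W := star U * V with hW
  have hWW : W * star W = 1 := by
    rw [hW, StarMul.star_mul, star_star]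
    calc star U * V * (star V * U) = star U * (V * star V) * U := by simp only [mul_assoc]
    _ = 1 := by rw [unit_mul hB, mul_one, mul_unit hA]
  have h1 : (W * star W) i i = ∑ j, W i j * (starRingEnd ℂ) (W i j) := by
    rw [Matrix.mul_apply]
    refine Finset.sum_congr rfl (fun j _ => ?_)
    rw [Matrix.star_apply, RCLike.star_def]
  have h2 : ((1 : Matrix (Fin n) (Fin n) ℂ) i i) = 1 := by simp
  rw [hWW, h2] at h1
  have h3 := congrArg Complex.re h1.symm
  rw [Complex.re_sum] at h3
  rw [← Complex.one_re, ← h3]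
  refine Finset.sum_congr rfl (fun j _ => ?_)
  rw [Complex.mul_conj, Complex.ofReal_re, Complex.normSq_eq_norm_sq]

lemma col_sum (hA : A.IsHermitian) (hB : B.IsHermitian) (j : Fin n) :
    ∑ i, ‖((star (hA.eigenvectorUnitary : Matrix (Fin n) (Fin n) ℂ) *
        (hB.eigenvectorUnitary : Matrix (Fin n) (Fin n) ℂ)) i j)‖^2 = 1 := by
  set U := (hA.eigenvectorUnitary : Matrix (Fin n) (Fin n) ℂ)
  set V := (hB.eigenvectorUnitary : Matrix (Fin n) (Fin n) ℂ)
  set W := star U * V with hW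
  have hWW : star W * W = 1 := by
    rw [hW, StarMul.star_mul, star_star]
    calc star V * U * (star U * V) = star V * (U * star U) * V := by simp only [mul_assoc]
    _ = 1 := by rw [unit_mul hA, mul_one, mul_unit hB]
  have h1 : (star W * W) j j = ∑ i, (starRingEnd ℂ) (W i j) * W i j := by
    rw [Matrix.mul_apply]
    refine Finset.sum_congr rfl (fun i _ => ?_)
    rw [Matrix.star_apply, RCLike.star_def]
  have h2 : ((1 : Matrix (Fin n) (Fin n) ℂ) j j) = 1 := by simp
  rw [hWW, h2] at h1
  have h3 := congrArg Complex.re h1.symm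
  rw [Complex.re_sum] at h3
  rw [← Complex.one_re, ← h3]
  refine Finset.sum_congr rfl (fun i _ => ?_)
  rw [mul_comm, Complex.mul_conj, Complex.ofReal_re, Complex.normSq_eq_norm_sq]

/-- posdef transfers across unitary conjugation (one direction) -/
lemma posDef_conj {U D : Matrix (Fin n) (Fin n) ℂ} (hU1 : U * star U = 1) (hU2 : star U * U = 1)
    (hD : D.PosDef) : (U * D * star U).PosDef := by
  refine posDef_iff_dotProduct_mulVec.mpr ⟨?_, fun x hx => ?_⟩
  · have := Matrix.isHermitian_mul_mul_conjTranspose U hD.1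
    simpa [Matrix.star_eq_conjTranspose, mul_assoc] using this
  · have hy : star U *ᵥ x ≠ 0 := by
      intro h
      apply hx
      have : U *ᵥ (star U *ᵥ x) = x := by rw [Matrix.mulVec_mulVec, hU1, Matrix.one_mulVec]
      rw [← this, h, Matrix.mulVec_zero]
    have key : dotProduct (star x) ((U * D * star U) *ᵥ x) =
        dotProduct (star (star U *ᵥ x)) (D *ᵥ (star U *ᵥ x)) := by
      rw [Matrix.star_mulVec, Matrix.star_eq_conjTranspose, Matrix.conjTranspose_conjTranspose]
      rw [← Matrix.mulVec_mulVec, ← Matrix.mulVec_mulVec]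
      rw [Matrix.dotProduct_mulVec (star x)]
    rw [key]
    exact hD.dotProduct_mulVec_pos hy

lemma posDef_cfc_iff (hA : A.IsHermitian) (f : ℝ → ℝ) :
    (cfc f A).PosDef ↔ ∀ i, 0 < f (hA.eigenvalues i) := by
  rw [hA.cfc_eq, Matrix.IsHermitian.cfc]
  simp only [Unitary.conjStarAlgAut_apply, Unitary.coe_star]
  have hd : ∀ (d : (Fin n) → ℝ),
      (diagonal ((RCLike.ofReal : ℝ → ℂ) ∘ d) : Matrix (Fin n) (Fin n) ℂ).PosDef ↔
        ∀ i, 0 < d i := by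
    intro d
    rw [Matrix.posDef_diagonal_iff]
    constructor
    · intro h i
      have := h i
      simpa [Function.comp] using this
    · intro h i
      simpa [Function.comp] using h i
  constructor
  · intro h
    have h2 : (diagonal ((RCLike.ofReal : ℝ → ℂ) ∘ f ∘ hA.eigenvalues)
        : Matrix (Fin n) (Fin n) ℂ).PosDef := by
      have h3 := posDef_conj (U := star (hA.eigenvectorUnitary : Matrix (Fin n) (Fin n) ℂ))
        (by rw [star_star]; exact mul_unit hA) (by rw [star_star]; exact unit_mul hA) h
      rw [star_star] at h3
      have e : star (hA.eigenvectorUnitary : Matrix (Fin n) (Fin n) ℂ) *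
          ((hA.eigenvectorUnitary : Matrix (Fin n) (Fin n) ℂ) *
            diagonal (RCLike.ofReal ∘ f ∘ hA.eigenvalues) *
            star (hA.eigenvectorUnitary : Matrix (Fin n) (Fin n) ℂ)) *
          (hA.eigenvectorUnitary : Matrix (Fin n) (Fin n) ℂ) =
          diagonal (RCLike.ofReal ∘ f ∘ hA.eigenvalues) := by
        calc star (hA.eigenvectorUnitary : Matrix (Fin n) (Fin n) ℂ) *
            ((hA.eigenvectorUnitary : Matrix (Fin n) (Fin n) ℂ) *
              diagonal (RCLike.ofReal ∘ f ∘ hA.eigenvalues) *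
              star (hA.eigenvectorUnitary : Matrix (Fin n) (Fin n) ℂ)) *
            (hA.eigenvectorUnitary : Matrix (Fin n) (Fin n) ℂ)
            = (star (hA.eigenvectorUnitary : Matrix (Fin n) (Fin n) ℂ) *
              (hA.eigenvectorUnitary : Matrix (Fin n) (Fin n) ℂ)) *
              diagonal (RCLike.ofReal ∘ f ∘ hA.eigenvalues) *
              (star (hA.eigenvectorUnitary : Matrix (Fin n) (Fin n) ℂ) *
              (hA.eigenvectorUnitary : Matrix (Fin n) (Fin n) ℂ)) := by
              simp only [mul_assoc]
        _ = diagonal (RCLike.ofReal ∘ f ∘ hA.eigenvalues) := by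
              rw [mul_unit hA, one_mul, mul_one]
      rw [e] at h3
      exact h3
    exact (hd _).mp h2
  · intro h
    exact posDef_conj (unit_mul hA) (mul_unit hA) ((hd _).mpr h)

lemma rtr_sub (M N : Matrix (Fin n) (Fin n) ℂ) : rtr (M - N) = rtr M - rtr N := by
  simp [rtr, Matrix.trace_sub, Complex.sub_re]

end TsallisAux

open TsallisAux in
theorem tsallis_relative_entropy_variational {n : ℕ} (q : ℝ)
    (hq1 : 1 ≤ q) (hq2 : q ≤ 2) (X A : Matrix (Fin n) (Fin n) ℂ)
    (hX : X.PosDef) (hA : A.PosDef) :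
    (∀ L : Matrix (Fin n) (Fin n) ℂ, L.IsHermitian →
        ((q - 1) • (L + mlogq q A) + 1).PosDef →
      rtr X + rtr (mpow X (2 - q) * L) - rtr (mexpq q (L + mlogq q A)) ≤
        rtr (mpow X (2 - q) * (mlogq q X - mlogq q A))) ∧
    (mlogq q X - mlogq q A).IsHermitian ∧
    ((q - 1) • ((mlogq q X - mlogq q A) + mlogq q A) + 1).PosDef ∧
    rtr X + rtr (mpow X (2 - q) * (mlogq q X - mlogq q A)) -
        rtr (mexpq q ((mlogq q X - mlogq q A) + mlogq q A)) =
      rtr (mpow X (2 - q) * (mlogq q X - mlogq q A)) := by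
  have hXh : X.IsHermitian := hX.1
  have hAh : A.IsHermitian := hA.1
  have hmlogA : mlogq q A = cfc (dlog q) A := matFun_cfc hAh (dlog q)
  have hmlogX : mlogq q X = cfc (dlog q) X := matFun_cfc hXh (dlog q)
  have hlogA : (mlogq q A).IsHermitian := by rw [hmlogA]; exact cfc_predicate _ _
  have hlogX : (mlogq q X).IsHermitian := by rw [hmlogX]; exact cfc_predicate _ _
  have hlamP : ∀ i, 0 < hXh.eigenvalues i := fun i => hX.eigenvalues_pos i
  have hcancel : (mlogq q X - mlogq q A) + mlogq q A = mlogq q X := by abel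
  have hidX : hXh.cfc id = X := by
    rw [← Matrix.IsHermitian.cfc_eq]; exact cfc_id ℝ X hXh
  have hXp : mpow X (2 - q) = hXh.cfc (fun t => t ^ (2 - q)) := by
    rw [← Matrix.IsHermitian.cfc_eq]; exact matFun_cfc hXh _
  refine ⟨?_, hlogX.sub hlogA, ?_, ?_⟩
  · -- main inequality
    intro L hL hPosL
    set K := L + mlogq q A with hKdef
    have hK : K.IsHermitian := by rw [hKdef]; exact hL.add hlogA
    have honeK : hK.cfc (fun _ : ℝ => (1:ℝ)) = 1 := by
      rw [← Matrix.IsHermitian.cfc_eq]; exact cfc_one' hK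
    have hκ : ∀ j, 0 < (q - 1) * hK.eigenvalues j + 1 := by
      have h1 : (q - 1) • K + 1 = cfc (fun t : ℝ => (q - 1) * t + 1) K := by
        nth_rewrite 1 [← cfc_id ℝ K hK]
        exact smul_cfc_add_one hK (q - 1) id
      rw [h1, posDef_cfc_iff hK] at hPosL
      exact hPosL
    have hLeq : L = K - mlogq q A := by rw [hKdef, add_sub_cancel_right]
    have hsplitL : rtr (mpow X (2 - q) * L) =
        rtr (mpow X (2 - q) * K) - rtr (mpow X (2 - q) * mlogq q A) := by
      rw [hLeq, mul_sub, rtr_sub]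
    have hsplitR : rtr (mpow X (2 - q) * (mlogq q X - mlogq q A)) =
        rtr (mpow X (2 - q) * mlogq q X) - rtr (mpow X (2 - q) * mlogq q A) := by
      rw [mul_sub, rtr_sub]
    set c : Fin n → Fin n → ℝ := fun i j =>
      ‖((star (hXh.eigenvectorUnitary : Matrix (Fin n) (Fin n) ℂ) *
        (hK.eigenvectorUnitary : Matrix (Fin n) (Fin n) ℂ)) i j)‖^2 with hc
    have hcnn : ∀ i j, 0 ≤ c i j := fun i j => by rw [hc]; positivity
    have e1 : rtr X = ∑ i, ∑ j, c i j * hXh.eigenvalues i := by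
      conv_lhs => rw [show X = hXh.cfc id * hK.cfc (fun _ : ℝ => (1:ℝ)) by
        rw [hidX, honeK, mul_one]]
      rw [rtr_cfc_mul_cfc hXh hK]
      simp only [hc, id_eq, mul_one]
    have e2 : rtr (mpow X (2 - q) * K) =
        ∑ i, ∑ j, c i j * (hXh.eigenvalues i ^ (2 - q) * hK.eigenvalues j) := by
      have hKid : K = hK.cfc id := by
        rw [← Matrix.IsHermitian.cfc_eq]; exact (cfc_id ℝ K hK).symm
      conv_lhs => rw [hXp, hKid]
      rw [rtr_cfc_mul_cfc hXh hK]
      simp only [hc, id_eq]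
    have e3 : rtr (mexpq q K) = ∑ i, ∑ j, c i j * dexp q (hK.eigenvalues j) := by
      have honeX : hXh.cfc (fun _ : ℝ => (1:ℝ)) = 1 := by
        rw [← Matrix.IsHermitian.cfc_eq]; exact cfc_one' hXh
      have h0 : mexpq q K = hXh.cfc (fun _ : ℝ => (1:ℝ)) * hK.cfc (dexp q) := by
        rw [honeX, one_mul, ← Matrix.IsHermitian.cfc_eq]
        exact matFun_cfc hK (dexp q)
      rw [h0, rtr_cfc_mul_cfc hXh hK]
      simp only [hc, one_mul]
    have e4 : rtr (mpow X (2 - q) * mlogq q X) =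
        ∑ i, ∑ j, c i j * (hXh.eigenvalues i ^ (2 - q) * dlog q (hXh.eigenvalues i)) := by
      have h0 : mpow X (2 - q) * mlogq q X =
          hXh.cfc (fun t => t ^ (2 - q) * dlog q t) * hK.cfc (fun _ : ℝ => (1:ℝ)) := by
        rw [honeK, mul_one, ← Matrix.IsHermitian.cfc_eq,
          show mpow X (2 - q) = cfc (fun t => t ^ (2 - q)) X from matFun_cfc hXh _,
          hmlogX, ← cfc_mul (fun t => t ^ (2 - q)) (dlog q) X (contOnSpec _ X) (contOnSpec _ X)]
      rw [h0, rtr_cfc_mul_cfc hXh hK]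
      simp only [hc, mul_one]
    have hmain : rtr X + rtr (mpow X (2 - q) * K) - rtr (mexpq q K) ≤
        rtr (mpow X (2 - q) * mlogq q X) := by
      rw [e1, e2, e3, e4]
      have sum3 : ∀ (F G H : Fin n → Fin n → ℝ),
          ((∑ i, ∑ j, F i j) + (∑ i, ∑ j, G i j)) - (∑ i, ∑ j, H i j) =
            ∑ i, ∑ j, (F i j + G i j - H i j) := by
        intro F G H
        rw [← Finset.sum_add_distrib, ← Finset.sum_sub_distrib]
        exact Finset.sum_congr rfl fun i _ => by
          rw [← Finset.sum_add_distrib, ← Finset.sum_sub_distrib]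
      rw [sum3]
      refine Finset.sum_le_sum (fun i _ => Finset.sum_le_sum (fun j _ => ?_))
      have hs := scalar_ineq hq1 hq2 (hlamP i) (hκ j)
      have hs2 := mul_le_mul_of_nonneg_left hs (hcnn i j)
      nlinarith [hs2]
    linarith [hmain, hsplitL, hsplitR]
  · -- positive definiteness at the optimum
    rw [hcancel, hmlogX]
    have h1 := smul_cfc_add_one hXh (q - 1) (dlog q)
    rw [h1, posDef_cfc_iff hXh]
    intro i
    rcases eq_or_ne q 1 with h | h
    · simp [dlog, h]
    · have hc : q - 1 ≠ 0 := sub_ne_zero.mpr h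
      rw [dlog, if_neg h, mul_div_cancel₀ _ hc, sub_add_cancel]
      exact Real.rpow_pos_of_pos (hlamP i) _
  · -- equality at the optimum
    rw [hcancel]
    have hcomp : mexpq q (mlogq q X) = X := by
      have h1 : (cfc (dlog q) X).IsHermitian := cfc_predicate _ _
      have h2 : mexpq q (mlogq q X) = cfc (dexp q) (cfc (dlog q) X) := by
        rw [hmlogX]; exact matFun_cfc h1 (dexp q)
      have h4 := cfc_comp (dexp q) (dlog q) X hXh
        (contOn (dexp q) _ ((Matrix.finite_real_spectrum (A := X)).image (dlog q)))
        (contOnSpec (dlog q) X)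
      rw [h2, ← h4]
      have h3 : (spectrum ℝ X).EqOn (dexp q ∘ dlog q) id := by
        intro t ht
        have htpos : 0 < t := by
          rw [hXh.spectrum_real_eq_range_eigenvalues] at ht
          obtain ⟨i, rfl⟩ := ht
          exact hlamP i
        simp [Function.comp, dexp_dlog htpos]
      rw [cfc_congr h3]
      exact cfc_id ℝ X hXh
    rw [hcomp]
    ring
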